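/- Let X, Y, Z be real vector spaces equipped with asymmetric norms p₁, p₂, q, and let A : X × Y → Z be a bilinear operator such that the set {q(A(x,y)) : p₁(x) ≤ 1, p₂(y) ≤ 1} is bounded above, with supremum ‖A|. Then sup{ ψ(A(x,y)) : ψ : Z → ℝ linear with ψ(z) ≤ q(z) for all z ∈ Z, and x ∈ X, y ∈ Y with p₁(x) ≤ 1, p₂(y) ≤ 1 } = ‖A|. (Equivalently, the adjoint A♭, defined by (A♭ψ)(x,y) = ψ(A(x,y)) on the dual cone Z♭ = {ψ linear continuous}, satisfies ‖A♭|_{q♭,‖·|} = ‖A|_{p₁,p₂;q}, since q♭(ψ) ≤ 1 is equivalent to ψ(z) ≤ q(z) for all z.) -/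

import Mathlib

/-- An asymmetric norm on a real vector space. -/
structure IsAsymNorm {X : Type*} [AddCommGroup X] [Module ℝ X] (p : X → ℝ) : Prop where
  nonneg : ∀ x, 0 ≤ p x
  eq_zero : ∀ x, p x = 0 → p (-x) = 0 → x = 0
  smul_eq : ∀ (a : ℝ) (x : X), 0 ≤ a → p (a • x) = a * p x
  add_le : ∀ x y, p (x + y) ≤ p x + p y

/-- A bilinear operator `T : X × Y → Z`. -/
def IsBilinOp {X Y Z : Type*} [AddCommGroup X] [Module ℝ X] [AddCommGroup Y] [Module ℝ Y]
    [AddCommGroup Z] [Module ℝ Z] (T : X × Y → Z) : Prop :=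
  (∀ x x' y, T (x + x', y) = T (x, y) + T (x', y)) ∧
  (∀ (a : ℝ) (x : X) (y : Y), T (a • x, y) = a • T (x, y)) ∧
  (∀ x y y', T (x, y + y') = T (x, y) + T (x, y')) ∧
  (∀ (a : ℝ) (x : X) (y : Y), T (x, a • y) = a • T (x, y))

lemma isAsymNorm_zero {Z : Type*} [AddCommGroup Z] [Module ℝ Z] {q : Z → ℝ}
    (hq : IsAsymNorm q) : q 0 = 0 := by
  have := hq.smul_eq 0 0 le_rfl
  simpa using this

lemma exists_dual {Z : Type*} [AddCommGroup Z] [Module ℝ Z] {q : Z → ℝ}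
    (hq : IsAsymNorm q) (z₀ : Z) :
    ∃ ψ : Z →ₗ[ℝ] ℝ, (∀ z, ψ z ≤ q z) ∧ ψ z₀ = q z₀ := by
  by_cases h0 : z₀ = 0
  · exact ⟨0, fun z => hq.nonneg z, by simp [h0, isAsymNorm_zero hq]⟩
  · have hfle : ∀ x : (LinearPMap.mkSpanSingleton (K := ℝ) (σ := RingHom.id ℝ) z₀ (q z₀) h0).domain,
        LinearPMap.mkSpanSingleton (K := ℝ) (σ := RingHom.id ℝ) z₀ (q z₀) h0 x ≤ q x := by
      rintro ⟨x, hx⟩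
      obtain ⟨c, rfl⟩ := Submodule.mem_span_singleton.mp hx
      rw [LinearPMap.mkSpanSingleton'_apply]
      rcases le_or_gt 0 c with hc | hc
      · rw [hq.smul_eq c z₀ hc]; simp [smul_eq_mul]
      · have : (c • q z₀ : ℝ) ≤ 0 := by
          simpa [smul_eq_mul] using mul_nonpos_of_nonpos_of_nonneg hc.le (hq.nonneg z₀)
        exact this.trans (hq.nonneg _)
    obtain ⟨g, hg1, hg2⟩ := exists_extension_of_le_sublinear
      (LinearPMap.mkSpanSingleton (K := ℝ) (σ := RingHom.id ℝ) z₀ (q z₀) h0) q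
      (fun c hc x => hq.smul_eq c x hc.le) hq.add_le hfle
    refine ⟨g, hg2, ?_⟩
    have hz₀mem : z₀ ∈ (LinearPMap.mkSpanSingleton (K := ℝ) (σ := RingHom.id ℝ) z₀ (q z₀) h0).domain :=
      Submodule.mem_span_singleton_self z₀
    have := hg1 ⟨z₀, hz₀mem⟩
    rw [this]
    exact LinearPMap.mkSpanSingleton_apply ℝ ℝ h0 (q z₀)

theorem stmt_8 {X Y Z : Type*} [AddCommGroup X] [Module ℝ X] [AddCommGroup Y] [Module ℝ Y]
    [AddCommGroup Z] [Module ℝ Z]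
    (p₁ : X → ℝ) (p₂ : Y → ℝ) (q : Z → ℝ)
    (hp₁ : IsAsymNorm p₁) (hp₂ : IsAsymNorm p₂) (hq : IsAsymNorm q)
    (A : X × Y → Z) (hA : IsBilinOp A)
    (hbd : BddAbove {r : ℝ | ∃ x y, p₁ x ≤ 1 ∧ p₂ y ≤ 1 ∧ r = q (A (x, y))}) :
    sSup {r : ℝ | ∃ (ψ : Z →ₗ[ℝ] ℝ) (x : X) (y : Y),
        (∀ z, ψ z ≤ q z) ∧ p₁ x ≤ 1 ∧ p₂ y ≤ 1 ∧ r = ψ (A (x, y))} =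
      sSup {r : ℝ | ∃ x y, p₁ x ≤ 1 ∧ p₂ y ≤ 1 ∧ r = q (A (x, y))} := by
  set S := {r : ℝ | ∃ x y, p₁ x ≤ 1 ∧ p₂ y ≤ 1 ∧ r = q (A (x, y))} with hS
  set L := {r : ℝ | ∃ (ψ : Z →ₗ[ℝ] ℝ) (x : X) (y : Y),
      (∀ z, ψ z ≤ q z) ∧ p₁ x ≤ 1 ∧ p₂ y ≤ 1 ∧ r = ψ (A (x, y))} with hL
  have hp₁0 : p₁ 0 ≤ 1 := by rw [isAsymNorm_zero hp₁]; norm_num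
  have hp₂0 : p₂ 0 ≤ 1 := by rw [isAsymNorm_zero hp₂]; norm_num
  have hSne : S.Nonempty := ⟨q (A (0, 0)), 0, 0, hp₁0, hp₂0, rfl⟩
  have hsub : S ⊆ L := by
    rintro r ⟨x, y, hx, hy, rfl⟩
    obtain ⟨ψ, hψ, hψeq⟩ := exists_dual hq (A (x, y))
    exact ⟨ψ, x, y, hψ, hx, hy, hψeq.symm⟩
  have hLne : L.Nonempty := hSne.mono hsub
  have hLbd : BddAbove L := by
    obtain ⟨M, hM⟩ := hbd
    refine ⟨M, ?_⟩
    rintro r ⟨ψ, x, y, hψ, hx, hy, rfl⟩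
    exact (hψ _).trans (hM ⟨x, y, hx, hy, rfl⟩)
  apply le_antisymm
  · apply csSup_le hLne
    rintro r ⟨ψ, x, y, hψ, hx, hy, rfl⟩
    exact (hψ _).trans (le_csSup hbd ⟨x, y, hx, hy, rfl⟩)
  · exact csSup_le_csSup hLbd hSne hsub
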